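/- Let k be a field of characteristic p > 2 and S = k⟨x,y⟩/(yx − xy − (1/2)x²). Let α = −y^{p−2} + ∑_{i=1}^{p−2} (−1)^{i+1} ((i+1)!/2^{i+1}) x^i y^{p−2−i} ∈ S. Then x·α = (x+y)^{p−1} − y^{p−1} + (1/2)x·[(x+y)^{p−2} − y^{p−2}] in S. -/

import Mathlib

section Aux

variable {k : Type*} [Field k] {S : Type*} [Ring S] [Algebra k S]

private theorem stmt6.auxA (x y : S) (hrel : y * x = x * y + (2:k)⁻¹ • x ^ 2) (i : ℕ) :
    y * x ^ i = x ^ i * y + ((i : k) * (2:k)⁻¹) • x ^ (i+1) := by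
  induction i with
  | zero => simp
  | succ n ih =>
    have h1 : y * x ^ (n+1) = (y * x ^ n) * x := by rw [pow_succ, ← mul_assoc]
    rw [h1, ih, add_mul, smul_mul_assoc, mul_assoc, hrel, mul_add, mul_smul_comm,
      ← mul_assoc, ← pow_succ, ← pow_add, ← pow_succ]
    have h2 : n + 2 = n + 1 + 1 := rfl
    rw [h2, add_assoc, ← add_smul]
    congr 2
    push_cast
    ring

private theorem stmt6.auxB (h2 : (2:k) ≠ 0) (x y : S)
    (hrel : y * x = x * y + (2:k)⁻¹ • x ^ 2) (m : ℕ) :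
    (x + y) ^ m = ∑ i ∈ Finset.range (m+1),
      (((m.choose i : k) * ((i+1).factorial : k)) / 2 ^ i) • (x ^ i * y ^ (m - i)) := by
  set g : ℕ → ℕ → k := fun m i => ((m.choose i : k) * ((i+1).factorial : k)) / 2 ^ i with hg
  induction m with
  | zero => simp [hg]
  | succ m ih =>
    have hx : x * ∑ i ∈ Finset.range (m+1), g m i • (x ^ i * y ^ (m - i))
        = ∑ i ∈ Finset.range (m+1), g m i • (x ^ (i+1) * y ^ (m - i)) := by
      rw [Finset.mul_sum]
      refine Finset.sum_congr rfl fun i hi => ?_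
      rw [mul_smul_comm, ← mul_assoc, ← pow_succ']
    have hy : y * ∑ i ∈ Finset.range (m+1), g m i • (x ^ i * y ^ (m - i))
        = (∑ i ∈ Finset.range (m+1), g m i • (x ^ i * y ^ (m + 1 - i)))
          + ∑ i ∈ Finset.range (m+1), (g m i * ((i:k) * (2:k)⁻¹)) • (x ^ (i+1) * y ^ (m - i)) := by
      rw [Finset.mul_sum, ← Finset.sum_add_distrib]
      refine Finset.sum_congr rfl fun i hi => ?_
      have hi' : i ≤ m := Nat.lt_succ_iff.mp (Finset.mem_range.mp hi)
      have hmi : m - i + 1 = m + 1 - i := by omega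
      rw [mul_smul_comm, ← mul_assoc, stmt6.auxA x y hrel i, add_mul, smul_mul_assoc,
        mul_assoc, ← pow_succ', hmi, smul_add, smul_smul]
    have hzero : g m (m+1) • (x ^ (m+1) * y ^ (m - m)) = 0 := by
      simp [hg, Nat.choose_succ_self]
    have hsplit : (∑ i ∈ Finset.range (m+1), g m i • (x ^ i * y ^ (m + 1 - i)))
        = (∑ i ∈ Finset.range (m+1), g m (i+1) • (x ^ (i+1) * y ^ (m - i)))
          + g m 0 • (x ^ 0 * y ^ (m+1)) := by
      rw [Finset.sum_range_succ']
      simp only [Nat.add_sub_add_right, Nat.sub_zero]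
      rw [Finset.sum_range_succ, hzero, add_zero]
    have coeff : ∀ i : ℕ, g (m+1) (i+1) = g m i + (g m i * ((i:k) * (2:k)⁻¹)) + g m (i+1) := by
      intro i
      have hfac : (i+2).factorial = (i+2) * (i+1).factorial := rfl
      have h5 : (2:k) ^ i ≠ 0 := pow_ne_zero _ h2
      simp only [hg, Nat.choose_succ_succ, hfac]
      push_cast
      rw [pow_succ]
      field_simp
      ring
    calc (x + y) ^ (m+1) = (x + y) * (x + y) ^ m := by rw [← pow_succ']
      _ = x * ∑ i ∈ Finset.range (m+1), g m i • (x ^ i * y ^ (m - i))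
          + y * ∑ i ∈ Finset.range (m+1), g m i • (x ^ i * y ^ (m - i)) := by
            rw [ih, add_mul]
      _ = ∑ i ∈ Finset.range (m+1), g (m+1) (i+1) • (x ^ (i+1) * y ^ (m - i))
          + g (m+1) 0 • (x ^ 0 * y ^ (m+1)) := by
            rw [hx, hy, hsplit]
            have hg0 : g m 0 = g (m+1) 0 := by simp [hg]
            rw [hg0]
            rw [← add_assoc, add_comm (∑ i ∈ Finset.range (m+1), g m i • (x ^ (i+1) * y ^ (m - i)))]
            rw [add_assoc, add_assoc, add_comm (g (m+1) 0 • (x ^ 0 * y ^ (m+1))), ← add_assoc,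
              ← add_assoc]
            congr 1
            rw [← Finset.sum_add_distrib, ← Finset.sum_add_distrib]
            refine Finset.sum_congr rfl fun i hi => ?_
            rw [coeff i, add_smul, add_smul]
            abel
      _ = ∑ i ∈ Finset.range (m+2), g (m+1) i • (x ^ i * y ^ (m + 1 - i)) := by
            rw [Finset.sum_range_succ' (fun i => g (m+1) i • (x ^ i * y ^ (m + 1 - i))) (m+1)]
            simp only [Nat.add_sub_add_right, Nat.sub_zero, pow_zero]

private theorem stmt6.chooseA {p : ℕ} (hp : p.Prime) [CharP k p] :
    ∀ j, j ≤ p - 1 → (((p-1).choose j : ℕ) : k) = (-1)^j := by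
  intro j
  induction j with
  | zero => simp
  | succ j ih =>
    intro hj
    have hp1 : 1 ≤ p := hp.pos
    have hpas : p.choose (j+1) = (p-1).choose j + (p-1).choose (j+1) := by
      have h : p = (p-1) + 1 := by omega
      conv_lhs => rw [h]
      rw [Nat.choose_succ_succ]
    have hdvd : p ∣ p.choose (j+1) := hp.dvd_choose_self (Nat.succ_ne_zero j) (by omega)
    have h0 : ((p.choose (j+1) : ℕ) : k) = 0 := (CharP.cast_eq_zero_iff k p _).mpr hdvd
    rw [hpas] at h0
    push_cast at h0
    rw [ih (by omega)] at h0
    linear_combination h0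

private theorem stmt6.chooseB {p : ℕ} (hp : p.Prime) (hp2 : 2 < p) [CharP k p] :
    ∀ j, j ≤ p - 2 → (((p-2).choose j : ℕ) : k) = (-1)^j * (j+1) := by
  intro j
  induction j with
  | zero => simp
  | succ j ih =>
    intro hj
    have hpas : (p-1).choose (j+1) = (p-2).choose j + (p-2).choose (j+1) := by
      have h : p - 1 = (p-2) + 1 := by omega
      conv_lhs => rw [h]
      rw [Nat.choose_succ_succ]
    have hA := stmt6.chooseA (k := k) hp (j+1) (by omega)
    rw [hpas] at hA
    push_cast at hA
    rw [ih (by omega)] at hA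
    push_cast
    linear_combination hA

end Aux

/-- Lemma on α, part (a): `x·α = (x+y)^{p−1} − y^{p−1} + (1/2)x[(x+y)^{p−2} − y^{p−2}]`. -/
theorem stmt6 (k : Type*) [Field k] (p : ℕ) (hp : p.Prime) (hp2 : 2 < p) [CharP k p]
    (S : Type*) [Ring S] [Algebra k S] (x y : S)
    (hrel : y * x = x * y + (2 : k)⁻¹ • x ^ 2) :
    x * (-(y ^ (p - 2)) +
        ∑ i ∈ Finset.Icc 1 (p - 2),
          (((-1 : k) ^ (i + 1) * ((i + 1).factorial : k)) / 2 ^ (i + 1)) •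
            (x ^ i * y ^ (p - 2 - i))) =
      (x + y) ^ (p - 1) - y ^ (p - 1) +
        (2 : k)⁻¹ • (x * ((x + y) ^ (p - 2) - y ^ (p - 2))) := by
  have h2 : (2:k) ≠ 0 := by
    intro h
    have h2' : ((2:ℕ):k) = 0 := by push_cast; exact h
    have hdvd := (CharP.cast_eq_zero_iff k p 2).mp h2'
    have := Nat.le_of_dvd (by norm_num) hdvd
    omega
  set n := p - 2 with hn
  have hn1 : p - 1 = n + 1 := by omega
  rw [hn1]
  set G : ℕ → ℕ → k := fun m i => ((m.choose i : k) * ((i+1).factorial : k)) / 2 ^ i with hG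
  have auxB := stmt6.auxB h2 x y hrel
  -- LHS normal form
  have hL : x * (-(y ^ n) +
        ∑ i ∈ Finset.Icc 1 n,
          (((-1 : k) ^ (i + 1) * ((i + 1).factorial : k)) / 2 ^ (i + 1)) •
            (x ^ i * y ^ (n - i)))
      = -(x * y ^ n) + ∑ i ∈ Finset.range n,
          (((-1 : k) ^ (i + 1 + 1) * ((i + 1 + 1).factorial : k)) / 2 ^ (i + 1 + 1)) •
            (x ^ (i + 1 + 1) * y ^ (n - (i + 1))) := by
    rw [mul_add, mul_neg, Finset.mul_sum, ← Finset.Ico_add_one_right_eq_Icc, Finset.sum_Ico_eq_sum_range]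
    congr 1
    refine Finset.sum_congr rfl fun i hi => ?_
    rw [Nat.add_comm 1 i, mul_smul_comm, ← mul_assoc, ← pow_succ']
  -- RHS part 1
  have hR1 : (x + y) ^ (n+1) - y ^ (n+1)
      = (∑ i ∈ Finset.range n, G (n+1) (i+1+1) • (x ^ (i+1+1) * y ^ (n - (i+1))))
        + G (n+1) (0+1) • (x ^ (0+1) * y ^ (n - 0)) := by
    rw [auxB (n+1),
      Finset.sum_range_succ' (fun i => G (n+1) i • (x ^ i * y ^ (n + 1 - i))) (n+1)]
    simp only [Nat.add_sub_add_right, Nat.sub_zero, pow_zero]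
    have hf0 : G (n+1) 0 • ((1:S) * y ^ (n+1)) = y ^ (n+1) := by
      simp [hG]
    rw [hf0, add_sub_cancel_right,
      Finset.sum_range_succ' (fun i => G (n+1) (i+1) • (x ^ (i+1) * y ^ (n - i))) n]
    norm_num
  -- RHS part 2
  have hR2 : (2:k)⁻¹ • (x * ((x + y) ^ n - y ^ n))
      = ∑ i ∈ Finset.range n,
          ((2:k)⁻¹ * G n (i+1)) • (x ^ (i+1+1) * y ^ (n - (i+1))) := by
    rw [auxB n, mul_sub, Finset.mul_sum]
    have e1 : ∀ i ∈ Finset.range (n+1),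
        x * (G n i • (x ^ i * y ^ (n - i))) = G n i • (x ^ (i+1) * y ^ (n - i)) := by
      intro i hi
      rw [mul_smul_comm, ← mul_assoc, ← pow_succ']
    rw [Finset.sum_congr rfl e1,
      Finset.sum_range_succ' (fun i => G n i • (x ^ (i+1) * y ^ (n - i))) n]
    have hf0 : G n 0 • (x ^ (0+1) * y ^ (n - 0)) = x * y ^ n := by
      simp [hG]
    rw [hf0, add_sub_cancel_right, Finset.smul_sum]
    refine Finset.sum_congr rfl fun i hi => ?_
    rw [smul_smul]
  rw [hL, hR1, hR2]
  -- the special degree-1 term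
  have hG1 : G (n+1) (0+1) • (x ^ (0+1) * y ^ (n - 0)) = -(x * y ^ n) := by
    have hc := stmt6.chooseA (k := k) hp 1 (by omega)
    rw [show p - 1 = n + 1 from hn1, Nat.choose_one_right] at hc
    have hc' : ((n:k) + 1) = -1 := by simpa using hc
    have hval : G (n+1) (0+1) = -1 := by
      simp only [hG]
      rw [Nat.choose_one_right]
      norm_num [Nat.factorial]
      rw [mul_div_assoc, div_self h2, mul_one]
      exact hc'
    rw [hval]
    simp
  rw [hG1, add_comm _ (-(x * y ^ n)), add_assoc, ← Finset.sum_add_distrib]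
  congr 1
  refine Finset.sum_congr rfl fun i hi => ?_
  have hi' : i < n := Finset.mem_range.mp hi
  rw [← add_smul]
  congr 1
  have hcA := stmt6.chooseA (k := k) hp (i+1+1) (by omega)
  rw [hn1] at hcA
  have hcB := stmt6.chooseB (k := k) hp hp2 (i+1) (by omega)
  rw [← hn] at hcB
  push_cast at hcB
  simp only [hG]
  have hfac : (i+1+1+1).factorial = (i+1+1+1) * (i+1+1).factorial := rfl
  rw [hcA, hcB, hfac]
  push_cast
  rw [pow_succ, pow_succ]
  have h5 : (2:k) ^ i ≠ 0 := pow_ne_zero _ h2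
  field_simp
  ring
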